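/- arXiv:2512.17670 — 3 statements merged into one kernel-verified Lean document; each statement's English description precedes it below -/
import Mathlib

section
/- Let Ω ⊆ ℝ^m be open and let E ⊂ Ω be compact with 𝓗¹(E) = 0. Let (w_j)_{j∈ℕ} be nonnegative, locally Lebesgue-integrable functions on Ω. Assume: (i) there exist r₀ > 0 and C ≥ 0 such that the closed r₀-neighborhood of E is contained in Ω and ∫_{B_r(x)} w_j dx ≤ C r for every j, every x with dist(x, E) < r₀, and every r ∈ (0, r₀); (ii) the family (w_j) is locally uniformly integrable on Ω \ E. Then the family (w_j) is locally uniformly integrable on Ω. -/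
open MeasureTheory Metric Set
open scoped ENNReal NNReal Topology

noncomputable section

lemma exists_cover_of_hausdorff_zero {m : ℕ} {E : Set (EuclideanSpace ℝ (Fin m))}
    (hEH : MeasureTheory.Measure.hausdorffMeasure (1 : ℝ) E = 0) {η : ℝ} (hη : 0 < η) :
    ∃ t : ℕ → Set (EuclideanSpace ℝ (Fin m)), E ⊆ ⋃ n, t n ∧
      ∑' n, EMetric.diam (t n) < ENNReal.ofReal η := by
  have h2 := hEH
  rw [MeasureTheory.Measure.hausdorffMeasure_apply] at h2
  have h3 : (⨅ (t : ℕ → Set (EuclideanSpace ℝ (Fin m))) (_ : E ⊆ ⋃ n, t n)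
      (_ : ∀ n, EMetric.diam (t n) ≤ 1),
        ∑' n, ⨆ _ : (t n).Nonempty, EMetric.diam (t n) ^ (1:ℝ)) = 0 := by
    refine le_antisymm ?_ zero_le
    rw [← h2]
    exact le_iSup₂ (f := fun (r : ℝ≥0∞) (_ : 0 < r) =>
      ⨅ (t : ℕ → Set (EuclideanSpace ℝ (Fin m))) (_ : E ⊆ ⋃ n, t n)
        (_ : ∀ n, EMetric.diam (t n) ≤ r),
          ∑' n, ⨆ _ : (t n).Nonempty, EMetric.diam (t n) ^ (1:ℝ)) 1 one_pos
  have h4 : (⨅ (t : ℕ → Set (EuclideanSpace ℝ (Fin m))) (_ : E ⊆ ⋃ n, t n)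
      (_ : ∀ n, EMetric.diam (t n) ≤ 1),
        ∑' n, ⨆ _ : (t n).Nonempty, EMetric.diam (t n) ^ (1:ℝ)) < ENNReal.ofReal η := by
    rw [h3]; exact ENNReal.ofReal_pos.2 hη
  simp only [iInf_lt_iff] at h4
  obtain ⟨t, hcov, _, hlt⟩ := h4
  refine ⟨t, hcov, lt_of_le_of_lt (ENNReal.tsum_le_tsum fun n => ?_) hlt⟩
  rcases (t n).eq_empty_or_nonempty with h | h
  · simp [h]; exact Metric.ediam_empty
  · simp [h, ENNReal.rpow_one]

/-- The family `(w j)` is uniformly integrable on `K` (with respect to Lebesgue measure):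
for every `ε > 0` there is `δ > 0` such that `∫_A w j ≤ ε` for every `j` and every
measurable `A ⊆ K` with `|A| < δ`. -/
def UnifIntOn {m : ℕ} (w : ℕ → EuclideanSpace ℝ (Fin m) → ℝ)
    (K : Set (EuclideanSpace ℝ (Fin m))) : Prop :=
  ∀ ε : ℝ, 0 < ε → ∃ δ : ℝ, 0 < δ ∧
    ∀ A : Set (EuclideanSpace ℝ (Fin m)), MeasurableSet A → A ⊆ K →
      volume A < ENNReal.ofReal δ →
      ∀ j : ℕ, ∫⁻ x in A, ENNReal.ofReal (w j x) ≤ ENNReal.ofReal ε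

/-- Removable singularity theorem for uniform integrability: if a family of nonnegative
locally integrable functions has linear mass growth on small balls near a compact set `E`
with `𝓗¹(E) = 0` and is locally uniformly integrable on `Ω \ E`, then it is locally
uniformly integrable on all of `Ω`. -/
theorem removable_singularity_uniform_integrability {m : ℕ}
    (Ω : Set (EuclideanSpace ℝ (Fin m))) (hΩ : IsOpen Ω)
    (E : Set (EuclideanSpace ℝ (Fin m))) (hEc : IsCompact E) (hEsub : E ⊆ Ω)
    (hEH : MeasureTheory.Measure.hausdorffMeasure (1 : ℝ) E = 0)
    (w : ℕ → EuclideanSpace ℝ (Fin m) → ℝ)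
    (hw0 : ∀ j x, 0 ≤ w j x)
    (hwloc : ∀ j, LocallyIntegrableOn (w j) Ω)
    (hgrow : ∃ r₀ C : ℝ, 0 < r₀ ∧ 0 ≤ C ∧ Metric.cthickening r₀ E ⊆ Ω ∧
      ∀ j : ℕ, ∀ x ∈ Metric.thickening r₀ E, ∀ r : ℝ, 0 < r → r < r₀ →
        ∫⁻ y in Metric.ball x r, ENNReal.ofReal (w j y) ≤ ENNReal.ofReal (C * r))
    (hui : ∀ K : Set (EuclideanSpace ℝ (Fin m)), IsCompact K → K ⊆ Ω \ E → UnifIntOn w K) :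
    ∀ K : Set (EuclideanSpace ℝ (Fin m)), IsCompact K → K ⊆ Ω → UnifIntOn w K := by
  classical
  obtain ⟨r₀, C, hr₀, hC, hth, hgr⟩ := hgrow
  intro K hK hKΩ ε hε
  rcases E.eq_empty_or_nonempty with hEe | ⟨e₀, he₀⟩
  · exact hui K hK (by rw [hEe, diff_empty]; exact hKΩ) ε hε
  -- choose η
  set η : ℝ := min (r₀ / 2) (ε / (4 * C + 4)) with hηdef
  have hηpos : 0 < η := lt_min (by linarith) (by positivity)
  have hηr₀ : η ≤ r₀ / 2 := min_le_left _ _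
  have hηε : η ≤ ε / (4 * C + 4) := min_le_right _ _
  -- cover of E with small total diameter
  obtain ⟨t, hcov, hsum⟩ := exists_cover_of_hausdorff_zero hEH hηpos
  -- small positive sequence
  obtain ⟨ds, hdspos, hdssum⟩ := ENNReal.exists_pos_sum_of_countable
    (ne_of_gt (ENNReal.ofReal_pos.2 hηpos)) ℕ
  -- centers and radii
  have hdiam_fin : ∀ n, EMetric.diam (t n) < ENNReal.ofReal η :=
    fun n => lt_of_le_of_lt (ENNReal.le_tsum n) hsum
  set x : ℕ → EuclideanSpace ℝ (Fin m) := fun n =>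
    if h : (t n ∩ E).Nonempty then h.choose else e₀ with hxdef
  have hxE : ∀ n, x n ∈ E := by
    intro n
    simp only [hxdef]
    split_ifs with h
    · exact h.choose_spec.2
    · exact he₀
  set ρ : ℕ → ℝ := fun n => (EMetric.diam (t n)).toReal + (ds n : ℝ) with hρdef
  have hρpos : ∀ n, 0 < ρ n := fun n =>
    add_pos_of_nonneg_of_pos ENNReal.toReal_nonneg (hdspos n)
  have hdsltη : ∀ n, (ds n : ℝ) < η := by
    intro n
    have h1 : (ds n : ℝ≥0∞) < ENNReal.ofReal η := lt_of_le_of_lt (ENNReal.le_tsum n) hdssum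
    have := (ENNReal.coe_lt_coe.1 (h1.trans_le (le_of_eq (ENNReal.ofReal_eq_coe_nnreal hηpos.le))))
    exact lt_of_lt_of_le this (le_of_eq rfl)
  have hdiamltη : ∀ n, (EMetric.diam (t n)).toReal < η := by
    intro n
    have := hdiam_fin n
    rw [← ENNReal.ofReal_toReal (ne_top_of_lt this)] at this
    exact (ENNReal.ofReal_lt_ofReal_iff hηpos).1 this
  have hρlt : ∀ n, ρ n < r₀ := by
    intro n
    have := hdiamltη n; have := hdsltη n
    simp only [hρdef]; linarith [hηr₀]
  -- the open union
  set U : Set (EuclideanSpace ℝ (Fin m)) := ⋃ n, Metric.ball (x n) (ρ n) with hUdef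
  have hUopen : IsOpen U := isOpen_iUnion fun n => isOpen_ball
  have hEU : E ⊆ U := by
    intro y hy
    obtain ⟨n, hn⟩ := mem_iUnion.1 (hcov hy)
    have hne : (t n ∩ E).Nonempty := ⟨y, hn, hy⟩
    have hx : x n ∈ t n := by
      simp only [hxdef]; rw [dif_pos hne]; exact hne.choose_spec.1
    have hd : edist y (x n) ≤ EMetric.diam (t n) := EMetric.edist_le_diam_of_mem hn hx
    have hfin : EMetric.diam (t n) ≠ ⊤ := ne_top_of_lt (hdiam_fin n)
    have hd2 : dist y (x n) ≤ (EMetric.diam (t n)).toReal := by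
      rw [dist_edist]
      exact ENNReal.toReal_mono hfin hd
    refine mem_iUnion.2 ⟨n, ?_⟩
    rw [Metric.mem_ball]
    refine lt_of_le_of_lt hd2 ?_
    simp only [hρdef]
    exact lt_add_of_pos_right _ (by exact_mod_cast hdspos n)
  -- ball mass estimate
  have hballs : ∀ j : ℕ, ∫⁻ y in U, ENNReal.ofReal (w j y) ≤ ENNReal.ofReal (ε / 2) := by
    intro j
    calc ∫⁻ y in U, ENNReal.ofReal (w j y)
        ≤ ∑' n, ∫⁻ y in Metric.ball (x n) (ρ n), ENNReal.ofReal (w j y) :=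
          lintegral_iUnion_le _ _
      _ ≤ ∑' n, ENNReal.ofReal (C * ρ n) := by
          refine ENNReal.tsum_le_tsum fun n => ?_
          exact hgr j (x n) (Metric.self_subset_thickening hr₀ E (hxE n)) (ρ n)
            (hρpos n) (hρlt n)
      _ = ENNReal.ofReal C * ∑' n, ENNReal.ofReal (ρ n) := by
          rw [← ENNReal.tsum_mul_left]
          congr 1; ext n; rw [ENNReal.ofReal_mul hC]
      _ ≤ ENNReal.ofReal C * (ENNReal.ofReal η + ENNReal.ofReal η) := by
          refine mul_le_mul_right ?_ _
          have : ∑' n, ENNReal.ofReal (ρ n)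
              = ∑' n, (EMetric.diam (t n) + (ds n : ℝ≥0∞)) := by
            congr 1; ext n
            rw [hρdef, ENNReal.ofReal_add ENNReal.toReal_nonneg (ds n).coe_nonneg,
              ENNReal.ofReal_toReal (ne_top_of_lt (hdiam_fin n)), ENNReal.ofReal_coe_nnreal]
          rw [this, ENNReal.tsum_add]
          exact add_le_add hsum.le hdssum.le
      _ ≤ ENNReal.ofReal (ε / 2) := by
          rw [← ENNReal.ofReal_add hηpos.le hηpos.le, ← ENNReal.ofReal_mul hC]
          refine ENNReal.ofReal_le_ofReal ?_
          have h4C : 0 < 4 * C + 4 := by linarith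
          have : C * (η + η) ≤ C * (2 * (ε / (4 * C + 4))) := by
            apply mul_le_mul_of_nonneg_left _ hC
            linarith [hηε]
          refine this.trans ?_
          rw [show C * (2 * (ε / (4 * C + 4))) = 2 * C * ε / (4 * C + 4) by ring,
            div_le_div_iff₀ h4C (by norm_num : (0:ℝ) < 2)]
          nlinarith [hε.le]
  -- uniform integrability away
  have hKU : IsCompact (K \ U) := hK.diff hUopen
  have hKUsub : K \ U ⊆ Ω \ E := fun y hy => ⟨hKΩ hy.1, fun hyE => hy.2 (hEU hyE)⟩
  obtain ⟨δ, hδpos, hδ⟩ := hui (K \ U) hKU hKUsub (ε / 2) (half_pos hε)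
  refine ⟨δ, hδpos, fun A hA hAK hAvol j => ?_⟩
  have hsplit : A = (A ∩ U) ∪ (A \ U) := (inter_union_diff A U).symm
  calc ∫⁻ y in A, ENNReal.ofReal (w j y)
      = ∫⁻ y in (A ∩ U) ∪ (A \ U), ENNReal.ofReal (w j y) := by rw [← hsplit]
    _ ≤ (∫⁻ y in A ∩ U, ENNReal.ofReal (w j y))
        + ∫⁻ y in A \ U, ENNReal.ofReal (w j y) := lintegral_union_le _ _ _
    _ ≤ ENNReal.ofReal (ε / 2) + ENNReal.ofReal (ε / 2) := by
        refine add_le_add ?_ ?_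
        · exact le_trans (lintegral_mono_set inter_subset_right) (hballs j)
        · exact hδ (A \ U) (hA.diff hUopen.measurableSet)
            (diff_subset_diff_left hAK)
            (lt_of_le_of_lt (measure_mono diff_subset) hAvol) j
    _ = ENNReal.ofReal ε := by
        rw [← ENNReal.ofReal_add (by linarith) (by linarith)]; norm_num
end
end

section
/- Let m ≥ 2 and ε ∈ (0, 1). Let u be twice continuously differentiable on an open subset of ℝ^m and let x be a point where Du(x) ≠ 0. Then the following refined Kato-type inequality holds: Σ_{i,j} (∂_i∂_j u(x))² ≥ ((m − ε)/(m − 1)) · |D²u(x)·Du(x)|² / |Du(x)|² − ((1 − ε)/(ε (m − 1))) · (Δu(x))², where D²u(x)·Du(x) is the vector with components Σ_j (∂_i∂_j u(x))(∂_j u(x)) and Δu = Σ_i ∂_i∂_i u. (Since D|Du| = (D²u·Du)/|Du| where Du ≠ 0, this says |D²u|² ≥ ((m−ε)/(m−1)) |D|Du||² − ((1−ε)/(ε(m−1)))(Δu)² at such points.) -/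
open MeasureTheory Metric Set
open scoped ENNReal NNReal Topology

noncomputable section

/-- Second partial derivative `∂_i ∂_j u (x)`. -/
noncomputable def hess {m : ℕ} (u : EuclideanSpace ℝ (Fin m) → ℝ)
    (x : EuclideanSpace ℝ (Fin m)) (i j : Fin m) : ℝ :=
  gradient (fun y => (gradient u y) j) x i

open scoped RealInnerProductSpace

lemma grad_coord {m : ℕ} (f : EuclideanSpace ℝ (Fin m) → ℝ)
    (y : EuclideanSpace ℝ (Fin m)) (j : Fin m) :
    (gradient f y) j = fderiv ℝ f y (EuclideanSpace.single j 1) := by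
  have h1 : (gradient f y) j =
      @inner ℝ _ _ ((EuclideanSpace.single j (1:ℝ) : EuclideanSpace ℝ (Fin m))) (gradient f y) := by
    rw [EuclideanSpace.inner_single_left]
    simp
  rw [h1, real_inner_comm]
  exact InnerProductSpace.toDual_symm_apply

lemma hess_eq {m : ℕ} {V : Set (EuclideanSpace ℝ (Fin m))} (hV : IsOpen V)
    {u : EuclideanSpace ℝ (Fin m) → ℝ} (hu : ContDiffOn ℝ 2 u V)
    {x : EuclideanSpace ℝ (Fin m)} (hx : x ∈ V) (i j : Fin m) :
    hess u x i j =
      fderiv ℝ (fderiv ℝ u) x (EuclideanSpace.single i 1) (EuclideanSpace.single j 1) := by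
  have hat : ContDiffAt ℝ 2 u x := hu.contDiffAt (hV.mem_nhds hx)
  have hdiff : DifferentiableAt ℝ (fderiv ℝ u) x :=
    (hat.fderiv_right (m := 1) (le_refl 2)).differentiableAt (by norm_num)
  have hfun : (fun y => (gradient u y) j) = fun y => fderiv ℝ u y (EuclideanSpace.single j 1) :=
    funext fun y => grad_coord u y j
  rw [hess, grad_coord, hfun]
  rw [fderiv_clm_apply hdiff (differentiableAt_const _)]
  simp

lemma hess_symm {m : ℕ} {V : Set (EuclideanSpace ℝ (Fin m))} (hV : IsOpen V)
    {u : EuclideanSpace ℝ (Fin m) → ℝ} (hu : ContDiffOn ℝ 2 u V)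
    {x : EuclideanSpace ℝ (Fin m)} (hx : x ∈ V) (i j : Fin m) :
    hess u x i j = hess u x j i := by
  have hat : ContDiffAt ℝ 2 u x := hu.contDiffAt (hV.mem_nhds hx)
  rw [hess_eq hV hu hx, hess_eq hV hu hx]
  exact hat.isSymmSndFDerivAt (by norm_num) _ _

/-- Key algebraic inequality for a symmetric matrix and a unit vector. -/
lemma kato_unit {m : ℕ} (hm : 2 ≤ m) {ε : ℝ} (hε0 : 0 < ε) (hε1 : ε < 1)
    (H : Fin m → Fin m → ℝ) (hsymm : ∀ i j, H i j = H j i)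
    (n : Fin m → ℝ) (hn : ∑ i, n i ^ 2 = 1) :
    ((m : ℝ) - ε) / ((m : ℝ) - 1) * (∑ i, (∑ j, H i j * n j) ^ 2)
      - (1 - ε) / (ε * ((m : ℝ) - 1)) * (∑ i, H i i) ^ 2
      ≤ ∑ i, ∑ j, H i j ^ 2 := by
  have hm1 : (0:ℝ) < (m:ℝ) - 1 := by
    have : (2:ℝ) ≤ (m:ℝ) := by exact_mod_cast hm
    linarith
  set P : Fin m → ℝ := fun i => ∑ j, H i j * n j with hPdef
  set a : ℝ := ∑ i, P i * n i with hadef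
  set Q : Fin m → ℝ := fun i => P i - a * n i with hQdef
  set T : ℝ := ∑ i, H i i with hTdef
  set q : ℝ := ∑ i, Q i ^ 2 with hqdef
  set S : ℝ := ∑ i, ∑ j, H i j ^ 2 with hSdef
  set c : ℝ := (T - a) / ((m:ℝ) - 1) with hcdef
  have hc : c * ((m:ℝ) - 1) = T - a := div_mul_cancel₀ _ hm1.ne'
  have hq0 : 0 ≤ q := Finset.sum_nonneg fun i _ => sq_nonneg _
  have hP : ∀ i, P i = Q i + a * n i := fun i => by simp [hQdef]
  have hQn : ∑ i, Q i * n i = 0 := by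
    simp only [hQdef]
    calc ∑ i, (P i - a * n i) * n i = (∑ i, P i * n i) - a * ∑ i, n i ^ 2 := by
          rw [Finset.mul_sum, ← Finset.sum_sub_distrib]
          exact Finset.sum_congr rfl fun i _ => by ring
      _ = 0 := by rw [hn, ← hadef]; ring
  have hnQ : ∑ i, n i * Q i = 0 := by
    rw [← hQn]; exact Finset.sum_congr rfl fun i _ => by ring
  have hcol : ∀ j, ∑ i, H i j * n i = P j := fun j => by
    rw [hPdef]
    exact Finset.sum_congr rfl fun i _ => by rw [hsymm]
  have hPQ : ∑ i, P i * Q i = q := by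
    calc ∑ i, P i * Q i = ∑ i, (Q i ^ 2 + a * (Q i * n i)) :=
          Finset.sum_congr rfl fun i _ => by rw [hP]; ring
      _ = q + a * ∑ i, Q i * n i := by
          rw [Finset.sum_add_distrib, ← Finset.mul_sum, hqdef]
      _ = q := by rw [hQn]; ring
  have hD : ∑ i, ∑ j, H i j * n i * Q j = q := by
    rw [Finset.sum_comm]
    calc ∑ j, ∑ i, H i j * n i * Q j = ∑ j, P j * Q j := by
          refine Finset.sum_congr rfl fun j _ => ?_
          rw [← hcol j, Finset.sum_mul]
      _ = q := hPQ
  have hE : ∑ i, ∑ j, H i j * Q i * n j = q := by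
    calc ∑ i, ∑ j, H i j * Q i * n j = ∑ i, Q i * P i := by
          refine Finset.sum_congr rfl fun i _ => ?_
          rw [hPdef, Finset.mul_sum]
          exact Finset.sum_congr rfl fun j _ => by ring
      _ = q := by rw [← hPQ]; exact Finset.sum_congr rfl fun i _ => by ring
  have hF : ∑ i, ∑ j, H i j * n i * n j = a := by
    calc ∑ i, ∑ j, H i j * n i * n j = ∑ i, n i * P i := by
          refine Finset.sum_congr rfl fun i _ => ?_
          rw [hPdef, Finset.mul_sum]
          exact Finset.sum_congr rfl fun j _ => by ring
      _ = a := by rw [hadef]; exact Finset.sum_congr rfl fun i _ => by ring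
  set A : Fin m → Fin m → ℝ :=
    fun i j => H i j - n i * Q j - Q i * n j - (a - c) * (n i * n j) with hAdef
  have hAsum : ∑ i, ∑ j, A i j ^ 2 = S - 2 * q + (a - c) ^ 2 - 2 * a * (a - c) := by
    have expand : ∑ i, ∑ j, A i j ^ 2 =
        ∑ i, ∑ j, (H i j ^ 2 + n i ^ 2 * Q j ^ 2 + Q i ^ 2 * n j ^ 2
          + (a - c) ^ 2 * (n i ^ 2 * n j ^ 2)
          - 2 * (H i j * n i * Q j) - 2 * (H i j * Q i * n j)
          - 2 * (a - c) * (H i j * n i * n j)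
          + 2 * ((Q i * n i) * (n j * Q j)) + 2 * (a - c) * (n i ^ 2 * (n j * Q j))
          + 2 * (a - c) * ((Q i * n i) * n j ^ 2)) :=
      Finset.sum_congr rfl fun i _ => Finset.sum_congr rfl fun j _ => by
        simp only [hAdef]; ring
    rw [expand]
    simp only [Finset.sum_add_distrib, Finset.sum_sub_distrib, ← Finset.mul_sum,
      ← Finset.sum_mul_sum, ← Finset.sum_mul, mul_one]
    rw [hn, hD, hE, hF, hnQ, hQn, ← hqdef, ← hSdef]
    ring
  have hAdiag : ∑ i, A i i = T - (a - c) := by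
    calc ∑ i, A i i = ∑ i, (H i i - n i * Q i - Q i * n i - (a - c) * n i ^ 2) :=
          Finset.sum_congr rfl fun i _ => by simp only [hAdef]; ring
      _ = T - (∑ i, n i * Q i) - (∑ i, Q i * n i) - (a - c) * ∑ i, n i ^ 2 := by
          simp only [Finset.sum_sub_distrib, ← Finset.mul_sum, hTdef]
      _ = T - (a - c) := by rw [hnQ, hQn, hn]; ring
  have hKinner : ∀ i, ∑ j, (A i j - c * (if i = j then (1:ℝ) else 0)) ^ 2
      = (∑ j, A i j ^ 2) - 2 * c * A i i + c ^ 2 := by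
    intro i
    have h1 : ∀ j, (A i j - c * (if i = j then (1:ℝ) else 0)) ^ 2
        = A i j ^ 2 + (if i = j then (-(2 * c * A i j) + c ^ 2) else 0) := by
      intro j; by_cases h : i = j <;> simp [h] <;> ring
    rw [Finset.sum_congr rfl fun j _ => h1 j, Finset.sum_add_distrib]
    rw [Finset.sum_ite_eq Finset.univ i (fun j => -(2 * c * A i j) + c ^ 2)]
    simp only [Finset.mem_univ, if_true]
    ring
  have hK : ∑ i, ∑ j, (A i j - c * (if i = j then (1:ℝ) else 0)) ^ 2
      = (∑ i, ∑ j, A i j ^ 2) - 2 * c * (∑ i, A i i) + c ^ 2 * m := by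
    rw [Finset.sum_congr rfl fun i _ => hKinner i]
    simp only [Finset.sum_add_distrib, Finset.sum_sub_distrib, ← Finset.mul_sum,
      Finset.sum_const, Finset.card_univ, Fintype.card_fin, nsmul_eq_mul]
    ring
  have hK0 : (0:ℝ) ≤ ∑ i, ∑ j, (A i j - c * (if i = j then (1:ℝ) else 0)) ^ 2 :=
    Finset.sum_nonneg fun i _ => Finset.sum_nonneg fun j _ => sq_nonneg _
  have key : a ^ 2 + 2 * q + ((m:ℝ) - 1) * c ^ 2 ≤ S := by
    have hKval : ∑ i, ∑ j, (A i j - c * (if i = j then (1:ℝ) else 0)) ^ 2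
        = S - a ^ 2 - 2 * q - ((m:ℝ) - 1) * c ^ 2 := by
      rw [hK, hAsum, hAdiag]
      linear_combination (2 * c) * hc
    rw [hKval] at hK0
    linarith
  have hPsum : ∑ i, P i ^ 2 = q + a ^ 2 := by
    calc ∑ i, P i ^ 2 = ∑ i, (Q i ^ 2 + 2 * a * (Q i * n i) + a ^ 2 * n i ^ 2) :=
          Finset.sum_congr rfl fun i _ => by rw [hP]; ring
      _ = q + 2 * a * (∑ i, Q i * n i) + a ^ 2 * ∑ i, n i ^ 2 := by
          simp only [Finset.sum_add_distrib, ← Finset.mul_sum, hqdef]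
      _ = q + a ^ 2 := by rw [hQn, hn]; ring
  have hgoalP : ∑ i, (∑ j, H i j * n j) ^ 2 = ∑ i, P i ^ 2 := rfl
  clear_value P a Q T q S c A
  rw [hgoalP, hPsum]
  have hpos : 0 < ε * ((m:ℝ) - 1) := mul_pos hε0 hm1
  have hm2 : (0:ℝ) ≤ (m:ℝ) + ε - 2 := by
    have : (2:ℝ) ≤ (m:ℝ) := by exact_mod_cast hm
    linarith
  have main : ((m:ℝ) - ε) / ((m:ℝ) - 1) * (q + a ^ 2)
      - (1 - ε) / (ε * ((m:ℝ) - 1)) * T ^ 2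
      ≤ a ^ 2 + 2 * q + ((m:ℝ) - 1) * c ^ 2 := by
    have h2 : ε * ((m:ℝ) - 1) * (((m:ℝ) - ε) / ((m:ℝ) - 1) * (q + a ^ 2)
        - (1 - ε) / (ε * ((m:ℝ) - 1)) * T ^ 2)
        ≤ ε * ((m:ℝ) - 1) * (a ^ 2 + 2 * q + ((m:ℝ) - 1) * c ^ 2) := by
      have e1 : ε * ((m:ℝ) - 1) * (((m:ℝ) - ε) / ((m:ℝ) - 1) * (q + a ^ 2)
          - (1 - ε) / (ε * ((m:ℝ) - 1)) * T ^ 2)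
          = ε * ((m:ℝ) - ε) * (q + a ^ 2) - (1 - ε) * T ^ 2 := by
        have d1 : ((m:ℝ) - ε) / ((m:ℝ) - 1) * ((m:ℝ) - 1) = (m:ℝ) - ε :=
          div_mul_cancel₀ _ hm1.ne'
        have d2 : (1 - ε) / (ε * ((m:ℝ) - 1)) * (ε * ((m:ℝ) - 1)) = 1 - ε :=
          div_mul_cancel₀ _ hpos.ne'
        linear_combination ε * (q + a ^ 2) * d1 - T ^ 2 * d2
      have e2 : ε * ((m:ℝ) - 1) * (a ^ 2 + 2 * q + ((m:ℝ) - 1) * c ^ 2)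
          = ε * ((m:ℝ) - 1) * (a ^ 2 + 2 * q) + ε * (T - a) ^ 2 := by
        rw [← hc]; ring
      rw [e1, e2]
      nlinarith [sq_nonneg (T - ε * a), mul_nonneg (mul_nonneg hε0.le hm2) hq0]
    exact le_of_mul_le_mul_left h2 hpos
  linarith

/-- Refined Kato-type inequality: at a point where `Du ≠ 0`, for `ε ∈ (0,1)`,
`|D²u|² ≥ ((m-ε)/(m-1)) |D²u·Du|²/|Du|² − ((1-ε)/(ε(m-1))) (Δu)²`. -/
theorem refined_kato_inequality {m : ℕ} (hm : 2 ≤ m)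
    (ε : ℝ) (hε : ε ∈ Set.Ioo (0 : ℝ) 1)
    (V : Set (EuclideanSpace ℝ (Fin m))) (hV : IsOpen V)
    (u : EuclideanSpace ℝ (Fin m) → ℝ) (hu : ContDiffOn ℝ 2 u V)
    (x : EuclideanSpace ℝ (Fin m)) (hx : x ∈ V) (hDu : gradient u x ≠ 0) :
    ((m : ℝ) - ε) / ((m : ℝ) - 1) *
        ((∑ i, (∑ j, hess u x i j * (gradient u x) j) ^ 2) / ‖gradient u x‖ ^ 2)
      - (1 - ε) / (ε * ((m : ℝ) - 1)) * (∑ i, hess u x i i) ^ 2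
      ≤ ∑ i, ∑ j, hess u x i j ^ 2 := by
  obtain ⟨hε0, hε1⟩ := hε
  have hsymm : ∀ i j, hess u x i j = hess u x j i := fun i j => hess_symm hV hu hx i j
  set g : EuclideanSpace ℝ (Fin m) := gradient u x with hg
  have hr : 0 < ‖g‖ := norm_pos_iff.mpr hDu
  have hnorm : ‖g‖ ^ 2 = ∑ i, g i ^ 2 := by
    rw [EuclideanSpace.norm_eq, Real.sq_sqrt (by positivity)]
    exact Finset.sum_congr rfl fun i _ => by rw [Real.norm_eq_abs, sq_abs]
  have hn : ∑ i, (g i / ‖g‖) ^ 2 = 1 := by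
    have h1 : ∑ i, (g i / ‖g‖) ^ 2 = (∑ i, g i ^ 2) / ‖g‖ ^ 2 := by
      rw [Finset.sum_div]
      exact Finset.sum_congr rfl fun i _ => div_pow _ _ _
    rw [h1, ← hnorm, div_self (by positivity)]
  have main := kato_unit hm hε0 hε1 (hess u x) hsymm (fun i => g i / ‖g‖) hn
  have hPP : ∑ i, (∑ j, hess u x i j * (g j / ‖g‖)) ^ 2
      = (∑ i, (∑ j, hess u x i j * g j) ^ 2) / ‖g‖ ^ 2 := by
    rw [Finset.sum_div]
    refine Finset.sum_congr rfl fun i _ => ?_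
    rw [← div_pow]
    congr 1
    rw [Finset.sum_div]
    exact Finset.sum_congr rfl fun j _ => (mul_div_assoc _ _ _).symm
  rw [hPP] at main
  exact main
end
end

section
/- Let L > 0 and let f_j : ℝ → ℝ (j ∈ ℕ) be 1-Lipschitz functions such that f_j(L) − f_j(0) → L as j → ∞. Then for every θ ∈ (0, 1), the Lebesgue measure of the set A_j(θ) := { t ∈ [0, L] : f_j is differentiable at t and |f_j′(t)| ≤ 1 − θ } tends to 0 as j → ∞. -/
open MeasureTheory Filter
open scoped ENNReal Topology

lemma key_fatou (L θ : ℝ) (hL : 0 < L) (hθ : 0 < θ) (f : ℝ → ℝ)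
    (hf : LipschitzWith 1 f) :
    ENNReal.ofReal θ *
      volume {t : ℝ | t ∈ Set.Icc (0 : ℝ) L ∧
        DifferentiableAt ℝ f t ∧ |deriv f t| ≤ 1 - θ} ≤
      ENNReal.ofReal (L - (f L - f 0)) := by
  set g : ℝ → ℝ := fun t => t - f t with hg
  have hfd : ∀ s t : ℝ, |f t - f s| ≤ |t - s| := by
    intro s t
    have := hf.dist_le_mul t s
    simpa [Real.dist_eq] using this
  have hgmono : Monotone g := by
    intro s t hst
    have h1 : f t - f s ≤ |t - s| := le_trans (le_abs_self _) (hfd s t)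
    have h2 : |t - s| = t - s := abs_of_nonneg (by linarith)
    simp only [hg]
    linarith [h2 ▸ h1]
  have hgcont : Continuous g := continuous_id.sub hf.continuous
  set c : ℕ → ℝ := fun n => 1 / ((n : ℝ) + 1) with hc
  have hcpos : ∀ n, 0 < c n := fun n => by positivity
  set h : ℕ → ℝ → ℝ := fun n t => (g (t + c n) - g t) * ((n : ℝ) + 1) with hh
  have hhnn : ∀ n t, 0 ≤ h n t := by
    intro n t
    have := hgmono (le_add_of_nonneg_right (hcpos n).le : t ≤ t + c n)
    have h0 : (0:ℝ) ≤ g (t + c n) - g t := by linarith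
    positivity
  -- integral bound for each n
  have hint : ∀ n : ℕ, ∫ t in Set.Icc (0:ℝ) L, h n t ≤ (g L - g 0) + 2 * c n := by
    intro n
    have hcL : IntervalIntegrable g volume 0 (c n) := hgcont.intervalIntegrable _ _
    have hmul : c n * ((n:ℝ) + 1) = 1 := by
      simp only [hc]
      field_simp
    have hIcc : ∫ t in Set.Icc (0:ℝ) L, h n t = ∫ t in (0:ℝ)..L, h n t := by
      rw [intervalIntegral.integral_of_le hL.le, MeasureTheory.integral_Icc_eq_integral_Ioc]
    rw [hIcc]
    have hcomp : Continuous fun t : ℝ => g (t + c n) := hgcont.comp (continuous_add_right _)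
    have hi1 : ∫ t in (0:ℝ)..L, h n t
        = ((∫ t in (0:ℝ)..L, g (t + c n)) - ∫ t in (0:ℝ)..L, g t) * ((n:ℝ) + 1) := by
      rw [← intervalIntegral.integral_sub (hcomp.intervalIntegrable _ _)
          (hgcont.intervalIntegrable _ _), ← intervalIntegral.integral_mul_const]
    have hi2 : ∫ t in (0:ℝ)..L, g (t + c n) = ∫ t in (0 + c n)..(L + c n), g t :=
      intervalIntegral.integral_comp_add_right g (c n)
    have hsplit1 : ∫ t in (0 + c n)..(L + c n), g t
        = (∫ t in (0 + c n)..L, g t) + ∫ t in L..(L + c n), g t :=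
      (intervalIntegral.integral_add_adjacent_intervals (hgcont.intervalIntegrable _ _)
        (hgcont.intervalIntegrable _ _)).symm
    have hsplit2 : ∫ t in (0:ℝ)..L, g t
        = (∫ t in (0:ℝ)..(c n), g t) + ∫ t in (c n)..L, g t :=
      (intervalIntegral.integral_add_adjacent_intervals (hgcont.intervalIntegrable _ _)
        (hgcont.intervalIntegrable _ _)).symm
    -- upper bound on ∫_L^{L+c} g and lower bound on ∫_0^c g
    have hub : ∫ t in L..(L + c n), g t ≤ c n * (g L + 2 * c n) := by
      have hbd : ∀ x ∈ Set.Icc L (L + c n), g x ≤ g L + 2 * c n := by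
        intro x hx
        have h1 : g x ≤ g (L + c n) := hgmono hx.2
        have h2 : f L - f (L + c n) ≤ |f (L + c n) - f L| := by
          rw [abs_sub_comm]; exact le_abs_self _
        have h3 : |f (L + c n) - f L| ≤ |L + c n - L| := hfd L (L + c n)
        have h4 : |L + c n - L| = c n := by
          rw [show L + c n - L = c n by ring, abs_of_pos (hcpos n)]
        simp only [hg] at h1 ⊢
        have := h4 ▸ h3
        linarith [le_trans h2 this]
      calc ∫ t in L..(L + c n), g t ≤ ∫ _t in L..(L + c n), (g L + 2 * c n) :=
            intervalIntegral.integral_mono_on (by linarith [hcpos n])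
              (hgcont.intervalIntegrable _ _) intervalIntegrable_const hbd
        _ = c n * (g L + 2 * c n) := by
            rw [intervalIntegral.integral_const, smul_eq_mul]; ring
    have hlb : c n * g 0 ≤ ∫ t in (0:ℝ)..(c n), g t := by
      have hbd : ∀ x ∈ Set.Icc (0:ℝ) (c n), g 0 ≤ g x := fun x hx => hgmono hx.1
      calc c n * g 0 = ∫ _t in (0:ℝ)..(c n), g 0 := by
            rw [intervalIntegral.integral_const, smul_eq_mul]; ring
        _ ≤ ∫ t in (0:ℝ)..(c n), g t :=
            intervalIntegral.integral_mono_on (hcpos n).le intervalIntegrable_const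
              (hgcont.intervalIntegrable _ _) hbd
    have h0c : (0:ℝ) + c n = c n := by ring
    rw [hi1, hi2, hsplit1, hsplit2, h0c]
    have key : (∫ t in (c n)..L, g t) + (∫ t in L..(L + c n), g t)
        - ((∫ t in (0:ℝ)..(c n), g t) + ∫ t in (c n)..L, g t)
        ≤ c n * (g L + 2 * c n) - c n * g 0 := by linarith
    have hm1 : (0:ℝ) ≤ (n:ℝ) + 1 := by positivity
    have h5 := mul_le_mul_of_nonneg_right key hm1
    have h6 : (c n * (g L + 2 * c n) - c n * g 0) * ((n:ℝ) + 1)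
        = (g L + 2 * c n - g 0) * (c n * ((n:ℝ) + 1)) := by ring
    rw [hmul, mul_one] at h6
    rw [h6] at h5
    linarith
  -- the set and its measurability
  set A : Set ℝ := {t : ℝ | t ∈ Set.Icc (0 : ℝ) L ∧
      DifferentiableAt ℝ f t ∧ |deriv f t| ≤ 1 - θ} with hA
  have hAsub : A ⊆ Set.Icc (0:ℝ) L := fun t ht => ht.1
  have hAmeas : MeasurableSet A := by
    have h1 : MeasurableSet {t : ℝ | DifferentiableAt ℝ f t} :=
      measurableSet_of_differentiableAt ℝ f
    have h2 : MeasurableSet {t : ℝ | |deriv f t| ≤ 1 - θ} :=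
      measurableSet_le (measurable_deriv f).abs measurable_const
    have : A = Set.Icc (0:ℝ) L ∩ ({t | DifferentiableAt ℝ f t} ∩ {t | |deriv f t| ≤ 1 - θ}) := by
      ext t; simp [hA, Set.mem_setOf_eq, and_assoc]
    rw [this]
    exact measurableSet_Icc.inter (h1.inter h2)
  -- pointwise liminf lower bound on A
  have hpt : ∀ t ∈ A, ENNReal.ofReal θ ≤ atTop.liminf fun n => ENNReal.ofReal (h n t) := by
    intro t ht
    obtain ⟨-, hdiff, hder⟩ := ht
    set d : ℝ := 1 - deriv f t with hd
    have hθd : θ ≤ d := by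
      have := (abs_le.1 hder).2
      simp only [hd]; linarith
    have hgder : HasDerivAt g d t := by
      exact (hasDerivAt_id t).sub hdiff.hasDerivAt
    have hslope := hasDerivAt_iff_tendsto_slope.1 hgder
    have hc0 : Tendsto c atTop (𝓝 (0:ℝ)) := tendsto_one_div_add_atTop_nhds_zero_nat
    have hseq : Tendsto (fun n => t + c n) atTop (𝓝[≠] t) := by
      rw [tendsto_nhdsWithin_iff]
      constructor
      · simpa using tendsto_const_nhds.add hc0
      · filter_upwards with n
        simp only [Set.mem_compl_iff, Set.mem_singleton_iff]
        intro hcontra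
        have := hcpos n
        nlinarith [congrArg (fun x => x - t) hcontra]
    have htend : Tendsto (fun n => h n t) atTop (𝓝 d) := by
      have h1 : Tendsto (fun n => slope g t (t + c n)) atTop (𝓝 d) := hslope.comp hseq
      have h2 : ∀ n, slope g t (t + c n) = h n t := by
        intro n
        rw [slope_def_field]
        have hne : t + c n - t = c n := by ring
        rw [hne]
        rw [div_eq_mul_inv]
        congr 1
        simp [hc]
      simpa [h2] using h1
    have := (ENNReal.tendsto_ofReal htend).liminf_eq
    rw [this]
    exact ENNReal.ofReal_le_ofReal hθd
  -- lintegral of each h n over Icc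
  have hlint : ∀ n, ∫⁻ t in Set.Icc (0:ℝ) L, ENNReal.ofReal (h n t)
      ≤ ENNReal.ofReal ((g L - g 0) + 2 * c n) := by
    intro n
    have hcont : Continuous (h n) := by
      exact ((hgcont.comp (continuous_add_right _)).sub hgcont).mul continuous_const
    have hintg : IntegrableOn (h n) (Set.Icc (0:ℝ) L) volume :=
      hcont.integrableOn_Icc
    rw [← MeasureTheory.ofReal_integral_eq_lintegral_ofReal hintg
        (ae_of_all _ fun t => hhnn n t)]
    exact ENNReal.ofReal_le_ofReal (hint n)
  -- Fatou and chain
  have hmeasq : ∀ n, Measurable fun t => ENNReal.ofReal (h n t) := by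
    intro n
    exact (((hgcont.comp (continuous_add_right _)).sub hgcont).mul
      continuous_const).measurable.ennreal_ofReal
  have hmeaslim : Measurable fun t => atTop.liminf fun n => ENNReal.ofReal (h n t) :=
    Measurable.liminf hmeasq
  calc ENNReal.ofReal θ * volume A
      = ∫⁻ _t in A, ENNReal.ofReal θ := (setLIntegral_const A _).symm
    _ ≤ ∫⁻ t in A, atTop.liminf fun n => ENNReal.ofReal (h n t) := by
        exact setLIntegral_mono_ae hmeaslim.aemeasurable (ae_of_all _ hpt)
    _ ≤ ∫⁻ t in Set.Icc (0:ℝ) L, atTop.liminf fun n => ENNReal.ofReal (h n t) :=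
        lintegral_mono' (Measure.restrict_mono hAsub le_rfl) le_rfl
    _ ≤ atTop.liminf fun n => ∫⁻ t in Set.Icc (0:ℝ) L, ENNReal.ofReal (h n t) :=
        lintegral_liminf_le hmeasq
    _ ≤ atTop.liminf fun n => ENNReal.ofReal ((g L - g 0) + 2 * c n) :=
        liminf_le_liminf (Eventually.of_forall hlint)
    _ = ENNReal.ofReal (g L - g 0) := by
        have hc0 : Tendsto c atTop (𝓝 (0:ℝ)) := tendsto_one_div_add_atTop_nhds_zero_nat
        have h2 : Tendsto (fun n : ℕ => g L - g 0 + 2 * c n) atTop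
            (𝓝 (g L - g 0 + 2 * 0)) := tendsto_const_nhds.add (hc0.const_mul 2)
        rw [mul_zero, add_zero] at h2
        exact (ENNReal.tendsto_ofReal h2).liminf_eq
    _ = ENNReal.ofReal (L - (f L - f 0)) := by
        congr 1
        simp only [hg]
        ring


/-- If `1`-Lipschitz functions `f j : ℝ → ℝ` satisfy `f j L − f j 0 → L`, then for every
`θ ∈ (0,1)` the Lebesgue measure of the set of points of `[0, L]` where `f j` is
differentiable with `|f j′| ≤ 1 − θ` tends to `0`. -/
theorem derivative_tends_to_one_in_measure (L : ℝ) (hL : 0 < L)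
    (f : ℕ → ℝ → ℝ) (hf : ∀ j, LipschitzWith 1 (f j))
    (hconv : Tendsto (fun j => f j L - f j 0) atTop (𝓝 L)) :
    ∀ θ : ℝ, θ ∈ Set.Ioo (0 : ℝ) 1 →
      Tendsto
        (fun j => volume {t : ℝ | t ∈ Set.Icc (0 : ℝ) L ∧
          DifferentiableAt ℝ (f j) t ∧ |deriv (f j) t| ≤ 1 - θ})
        atTop (𝓝 0) := by
  intro θ hθ
  obtain ⟨hθ0, hθ1⟩ := hθ
  have hub : ∀ j, volume {t : ℝ | t ∈ Set.Icc (0 : ℝ) L ∧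
      DifferentiableAt ℝ (f j) t ∧ |deriv (f j) t| ≤ 1 - θ}
      ≤ ENNReal.ofReal ((L - (f j L - f j 0)) / θ) := by
    intro j
    have hkey := key_fatou L θ hL hθ0 (f j) (hf j)
    rw [ENNReal.ofReal_div_of_pos hθ0]
    rw [ENNReal.le_div_iff_mul_le (Or.inl (by simp [ENNReal.ofReal_eq_zero]; linarith))
      (Or.inl ENNReal.ofReal_ne_top)]
    rwa [mul_comm]
  have hbound : Tendsto (fun j => ENNReal.ofReal ((L - (f j L - f j 0)) / θ)) atTop (𝓝 0) := by
    have hr : Tendsto (fun j => (L - (f j L - f j 0)) / θ) atTop (𝓝 0) := by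
      have h1 : Tendsto (fun j => L - (f j L - f j 0)) atTop (𝓝 (L - L)) :=
        (tendsto_const_nhds (x := L) (f := atTop)).sub hconv
      have h2 := h1.div_const θ
      simpa using h2
    have := ENNReal.tendsto_ofReal hr
    simpa using this
  exact tendsto_of_tendsto_of_tendsto_of_le_of_le tendsto_const_nhds hbound
    (fun j => zero_le) hub
end
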